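/- Let G be the Klein four-group with nonidentity elements a, b, c, k an algebraically closed field of characteristic 2, and U = kG/(a−1) the quotient of the regular module by the ideal generated by a−1. Let ℓ be the automorphism of G cyclically permuting a, b, c. Then the kG-module U ⊗_k ^ℓU is projective, but U ⊗_k U is not projective. -/

import Mathlib

open TensorProduct

/-- The Klein four-group. -/
abbrev KleinFour : Type := Multiplicative (ZMod 2) × Multiplicative (ZMod 2)

/-- The module `U = kG/(a−1)`: quotient of the left regular module by the ideal gen. by `a−1`. -/
abbrev Umod (k : Type) [Field k] (a : KleinFour) : Type :=
  (MonoidAlgebra k KleinFour) ⧸ Ideal.span {MonoidAlgebra.of k KleinFour a - 1}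

/-- `U` as a representation of the Klein four-group (on a scalar-restricted type synonym). -/
noncomputable def rhoU (k : Type) [Field k] (a : KleinFour) :
    Representation k KleinFour
      (RestrictScalars k (MonoidAlgebra k KleinFour) (Umod k a)) :=
  Representation.ofModule (Umod k a)

/-- The twist `^σV` of a representation: the same space with action `g · m := σ⁻¹(g) m`. -/
def twist {k V : Type} [Field k] [AddCommGroup V] [Module k V]
    (σ : KleinFour ≃* KleinFour) (ρ : Representation k KleinFour V) :
    Representation k KleinFour V :=
  ρ.comp σ.symm.toMonoidHom

/-- Port helper: the `k`-module structure `RestrictScalars.module` on `RestrictScalars k kG U`,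
stated over the additive monoid underlying its additive group (as `twist` requires). -/
noncomputable instance moduleRestrictScalarsUmod (k : Type) [Field k] (a : KleinFour) :
    @Module k (RestrictScalars k (MonoidAlgebra k KleinFour) (Umod k a)) _
      AddCommGroup.toAddCommMonoid :=
  (RestrictScalars.module k (MonoidAlgebra k KleinFour) (Umod k a) :)

set_option linter.unusedSectionVars false
set_option maxHeartbeats 4000000
set_option synthInstance.maxHeartbeats 400000

lemma twist_apply {k V : Type} [Field k] [AddCommGroup V] [Module k V]
    (σ : KleinFour ≃* KleinFour) (ρ : Representation k KleinFour V) (g : KleinFour) :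
    twist σ ρ g = ρ (σ.symm g) := rfl

lemma klein_sq : ∀ g : KleinFour, g * g = 1 := by decide

lemma klein_inv : ∀ g : KleinFour, g⁻¹ = g := by decide

lemma klein_cases {a b c : KleinFour} (ha : a ≠ 1) (hb : b ≠ 1) (hc : c ≠ 1)
    (hab : a ≠ b) (hac : a ≠ c) (hbc : b ≠ c) (g : KleinFour) :
    g = 1 ∨ g = a ∨ g = b ∨ g = c := by
  have hinj : Function.Injective ![1, a, b, c] := by
    intro i j hij
    fin_cases i <;> fin_cases j <;> simp_all
  have hsurj : Function.Surjective ![1, a, b, c] :=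
    ((Fintype.bijective_iff_injective_and_card _).2 ⟨hinj, by decide⟩).2
  obtain ⟨i, hi⟩ := hsurj g
  fin_cases i <;> simp at hi <;> tauto

section
variable {k : Type} [Field k] [CharP k 2] {a b c : KleinFour}
  (ha : a ≠ 1) (hb : b ≠ 1) (hc : c ≠ 1) (hab : a ≠ b) (hac : a ≠ c) (hbc : b ≠ c)

include ha hb hc hab hac hbc in
lemma klein_mul_ab : a * b = c := by
  rcases klein_cases ha hb hc hab hac hbc (a * b) with h | h | h | h
  · exact absurd (mul_left_cancel (h.trans (klein_sq a).symm)) hab.symm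
  · exact absurd (mul_left_cancel (h.trans (mul_one a).symm)) hb
  · exact absurd (mul_right_cancel (h.trans (one_mul b).symm)) ha
  · exact h

include ha hb hc hab hac hbc in
lemma klein_mul_ba : b * a = c := (mul_comm b a).trans (klein_mul_ab ha hb hc hab hac hbc)

include ha hb hc hab hac hbc in
lemma klein_mul_ca : c * a = b :=
  (mul_comm c a).trans (klein_mul_ab ha hc hb hac hab hbc.symm)

local notation "R" => MonoidAlgebra k KleinFour
local notation "ee" => (MonoidAlgebra.of k KleinFour a - 1 : MonoidAlgebra k KleinFour)
local notation "II" => Ideal.span {(MonoidAlgebra.of k KleinFour a - 1 : MonoidAlgebra k KleinFour)}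

lemma coeff_mul_e (x : R) (g : KleinFour) : (x * ee).coeff g = x.coeff (g * a) - x.coeff g := by
  rw [mul_sub, mul_one, MonoidAlgebra.coeff_sub, Finsupp.sub_apply, MonoidAlgebra.of_apply,
    MonoidAlgebra.coeff_mul_single_apply, klein_inv, mul_one]

include ha hb hc hab hac hbc in
lemma mem_span_coeff {x : R} (hx : x ∈ II) : x.coeff 1 = x.coeff a ∧ x.coeff b = x.coeff c := by
  obtain ⟨r, rfl⟩ := Ideal.mem_span_singleton'.1 hx
  constructor
  · rw [coeff_mul_e, coeff_mul_e, one_mul, klein_sq, CharTwo.sub_eq_add, CharTwo.sub_eq_add,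
      add_comm]
  · rw [coeff_mul_e, coeff_mul_e, klein_mul_ba ha hb hc hab hac hbc,
      klein_mul_ca ha hb hc hab hac hbc, CharTwo.sub_eq_add, CharTwo.sub_eq_add, add_comm]

include ha hb hc hab hac hbc in
lemma one_not_mem : (1 : R) ∉ II := by
  intro h
  have h1 := (mem_span_coeff ha hb hc hab hac hbc h).1
  rw [MonoidAlgebra.one_def, MonoidAlgebra.coeff_single, Finsupp.single_eq_same,
    Finsupp.single_eq_of_ne' (Ne.symm ha)] at h1
  exact one_ne_zero h1

include ha hb hc hab hac hbc in
lemma indep_coeff {α γ : k}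
    (h : MonoidAlgebra.single (1 : KleinFour) α + MonoidAlgebra.single b γ ∈ II) :
    α = 0 ∧ γ = 0 := by
  obtain ⟨h1, h2⟩ := mem_span_coeff ha hb hc hab hac hbc h
  simp only [MonoidAlgebra.coeff_add, MonoidAlgebra.coeff_single] at h1 h2
  rw [Finsupp.add_apply, Finsupp.add_apply, Finsupp.single_eq_same,
    Finsupp.single_eq_of_ne' hb, Finsupp.single_eq_of_ne' (Ne.symm ha),
    Finsupp.single_eq_of_ne' (Ne.symm hab), add_zero, add_zero] at h1
  rw [Finsupp.add_apply, Finsupp.add_apply, Finsupp.single_eq_same,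
    Finsupp.single_eq_of_ne' (Ne.symm hb), Finsupp.single_eq_of_ne' (Ne.symm hc),
    Finsupp.single_eq_of_ne' hbc, add_zero, zero_add] at h2
  exact ⟨h1.trans (by simp), h2⟩

include ha hb hc hab hac hbc in
lemma decomp (x : R) :
    x = MonoidAlgebra.single 1 (x.coeff 1) + MonoidAlgebra.single a (x.coeff a)
      + MonoidAlgebra.single b (x.coeff b) + MonoidAlgebra.single c (x.coeff c) := by
  ext g
  simp only [MonoidAlgebra.coeff_add, MonoidAlgebra.coeff_single, Finsupp.add_apply]
  rcases klein_cases ha hb hc hab hac hbc g with rfl | rfl | rfl | rfl <;>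
    simp [Finsupp.single_apply, ha, hb, hc, hab, hac, hbc,
      Ne.symm ha, Ne.symm hb, Ne.symm hc, Ne.symm hab, Ne.symm hac, Ne.symm hbc]

include ha hb hc hab hac hbc in
lemma ker_sub {x : R} (hx : x * ee = 0) : x ∈ II := by
  have h1 : x.coeff a = x.coeff 1 := by
    have := congrArg (fun z : MonoidAlgebra k KleinFour => z.coeff 1) hx
    rw [coeff_mul_e, one_mul] at this
    simpa [sub_eq_zero] using this
  have h2 : x.coeff c = x.coeff b := by
    have := congrArg (fun z : MonoidAlgebra k KleinFour => z.coeff b) hx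
    rw [coeff_mul_e, klein_mul_ba ha hb hc hab hac hbc] at this
    simpa [sub_eq_zero] using this
  refine Ideal.mem_span_singleton'.2 ⟨MonoidAlgebra.single 1 (x.coeff 1) + MonoidAlgebra.single b (x.coeff b), ?_⟩
  rw [add_mul, mul_sub, mul_sub, mul_one, mul_one, MonoidAlgebra.of_apply]
  rw [MonoidAlgebra.single_mul_single, MonoidAlgebra.single_mul_single, one_mul, mul_one, mul_one,
    klein_mul_ba ha hb hc hab hac hbc]
  have hneg : ∀ (g : KleinFour) (κ : k),
      -(MonoidAlgebra.single g κ : R) = MonoidAlgebra.single g κ := by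
    intro g κ
    rw [← MonoidAlgebra.single_neg, CharTwo.neg_eq]
  conv_lhs => rw [sub_eq_add_neg, sub_eq_add_neg, hneg, hneg]
  conv_rhs => rw [decomp ha hb hc hab hac hbc x, h1, h2]
  abel

include ha hb hc hab hac hbc in
lemma klein_mul_cb : c * b = a := by
  rw [← klein_mul_ab ha hb hc hab hac hbc, mul_assoc, klein_sq, mul_one]

lemma mem_II_single (g : KleinFour) (κ : k) :
    (MonoidAlgebra.single (g * a) κ - MonoidAlgebra.single g κ : MonoidAlgebra k KleinFour)
      ∈ II := by
  have h : (MonoidAlgebra.single (g * a) κ - MonoidAlgebra.single g κ : MonoidAlgebra k KleinFour)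
      = MonoidAlgebra.single g κ * ee := by
    rw [mul_sub, mul_one, MonoidAlgebra.of_apply, MonoidAlgebra.single_mul_single, mul_one]
  rw [h]
  exact Ideal.mul_mem_left _ _ (Ideal.mem_span_singleton_self _)

include ha hb hc hab hac hbc in
lemma sub_rep (x : R) :
    x - (MonoidAlgebra.single (1 : KleinFour) (x.coeff 1 + x.coeff a)
      + MonoidAlgebra.single b (x.coeff b + x.coeff c)) ∈ II := by
  have h1 := mem_II_single (k := k) (a := a) 1 (x.coeff a)
  rw [one_mul] at h1
  have h2 := mem_II_single (k := k) (a := a) b (x.coeff c)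
  rw [klein_mul_ba ha hb hc hab hac hbc] at h2
  have hmem := add_mem h1 h2
  have heq : x - (MonoidAlgebra.single (1 : KleinFour) (x.coeff 1 + x.coeff a)
        + MonoidAlgebra.single b (x.coeff b + x.coeff c))
      = (MonoidAlgebra.single a (x.coeff a) - MonoidAlgebra.single (1 : KleinFour) (x.coeff a))
        + (MonoidAlgebra.single c (x.coeff c) - MonoidAlgebra.single b (x.coeff c)) := by
    rw [MonoidAlgebra.single_add, MonoidAlgebra.single_add]
    linear_combination decomp ha hb hc hab hac hbc x
  rw [heq]
  exact hmem

end

section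
variable {k : Type} [Field k] {a : KleinFour}
local notation "R" => MonoidAlgebra k KleinFour

noncomputable def uuV (k : Type) [Field k] (a : KleinFour) (x : MonoidAlgebra k KleinFour) :
    RestrictScalars k (MonoidAlgebra k KleinFour) (Umod k a) :=
  (RestrictScalars.addEquiv k (MonoidAlgebra k KleinFour) (Umod k a)).symm
    (Ideal.Quotient.mk _ x)

lemma uuV_add (x y : MonoidAlgebra k KleinFour) :
    uuV k a (x + y) = uuV k a x + uuV k a y := rfl

lemma uuV_surjective : Function.Surjective (uuV k a) := by
  intro v
  obtain ⟨x, hx⟩ := Ideal.Quotient.mk_surjective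
    (RestrictScalars.addEquiv k (MonoidAlgebra k KleinFour) (Umod k a) v)
  exact ⟨x, by rw [uuV, hx]; simp⟩

lemma uuV_eq_iff (x y : R) : uuV k a x = uuV k a y ↔
    x - y ∈ Ideal.span {MonoidAlgebra.of k KleinFour a - 1} := by
  rw [uuV, uuV, EmbeddingLike.apply_eq_iff_eq, Ideal.Quotient.mk_eq_mk_iff_sub_mem]

lemma rhoU_apply (g : KleinFour) (x : R) :
    rhoU k a g (uuV k a x) = uuV k a (MonoidAlgebra.of k KleinFour g * x) := by
  have h := Representation.ofModule_asAlgebraHom_apply_apply (k := k) (G := KleinFour)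
    (Umod k a) (MonoidAlgebra.of k KleinFour g) (uuV k a x)
  rw [Representation.asAlgebraHom_of] at h
  rw [rhoU, h]
  rfl

lemma uuV_ksmul (c : k) (x : R) :
    c • uuV k a x = uuV k a (MonoidAlgebra.single (1 : KleinFour) c * x) := rfl

/-- the scalar-restricted quotient as a `k`-module, identified with the quotient -/
noncomputable def vequiv (k : Type) [Field k] (a : KleinFour) :
    (RestrictScalars k (MonoidAlgebra k KleinFour) (Umod k a)) ≃ₗ[k] Umod k a :=
  { RestrictScalars.addEquiv k (MonoidAlgebra k KleinFour) (Umod k a) with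
    map_smul' := fun c x => by
      show RestrictScalars.addEquiv k _ _ (c • x) = c • RestrictScalars.addEquiv k _ _ x
      rw [RestrictScalars.addEquiv_map_smul, algebraMap_smul] }

/-- build a `k`-linear functional on the scalar-restricted quotient from a functional on the
group algebra vanishing on the ideal -/
noncomputable def epsV (f : MonoidAlgebra k KleinFour →ₗ[k] k)
    (hf : ∀ x ∈ Ideal.span {MonoidAlgebra.of k KleinFour a - 1}, f x = 0) :
    (RestrictScalars k (MonoidAlgebra k KleinFour) (Umod k a)) →ₗ[k] k :=
  ((Submodule.liftQ ((Ideal.span {MonoidAlgebra.of k KleinFour a - 1}).restrictScalars k) f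
      (fun x hx => hf x hx)) ∘ₗ
    (Submodule.Quotient.restrictScalarsEquiv k
      ((Ideal.span {MonoidAlgebra.of k KleinFour a - 1}) :
        Submodule (MonoidAlgebra k KleinFour) (MonoidAlgebra k KleinFour))).symm.toLinearMap) ∘ₗ
  (vequiv k a).toLinearMap

lemma epsV_uuV (f : MonoidAlgebra k KleinFour →ₗ[k] k) (hf) (x : R) :
    epsV (a := a) f hf (uuV k a x) = f x := rfl

/-- the coefficient-extraction functionals on the group algebra -/
noncomputable def coeffL (g : KleinFour) : MonoidAlgebra k KleinFour →ₗ[k] k where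
  toFun x := x.coeff g
  map_add' _ _ := rfl
  map_smul' _ _ := rfl

@[simp] lemma coeffL_apply (g : KleinFour) (x : R) : coeffL g x = x.coeff g := rfl

end

lemma tensor_expand {k V W : Type} [CommRing k] [AddCommGroup V] [Module k V]
    [AddCommGroup W] [Module k W] (u1 ub : V) (v1 vb : W) (α γ α' γ' : k) :
    (α * α') • (u1 ⊗ₜ[k] v1) + (α * γ') • (u1 ⊗ₜ[k] vb)
        + (γ * α') • (ub ⊗ₜ[k] v1) + (γ * γ') • (ub ⊗ₜ[k] vb)
      = (α • u1 + γ • ub) ⊗ₜ[k] (α' • v1 + γ' • vb) := by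
  simp only [TensorProduct.add_tmul, TensorProduct.tmul_add, TensorProduct.smul_tmul,
    TensorProduct.tmul_smul, smul_smul]
  module

section RepHelpers
variable {k G V W : Type} [CommRing k] [Group G] [AddCommMonoid V] [Module k V]
  [AddCommMonoid W] [Module k W] (ρV : Representation k G V) (ρW : Representation k G W)

lemma of_smul_tmul (g : G) (x : V) (y : W) :
    (MonoidAlgebra.of k G g) • (show (ρV.tprod ρW).asModule from x ⊗ₜ y)
      = (show (ρV.tprod ρW).asModule from (ρV g x) ⊗ₜ[k] (ρW g y)) := by
  show (ρV.tprod ρW).asAlgebraHom (MonoidAlgebra.of k G g) (x ⊗ₜ y) = _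
  rw [Representation.asAlgebraHom_of]
  rfl

lemma asModule_ksmul (ρ : Representation k G V) (c : k) (m : ρ.asModule) :
    c • m = algebraMap k (MonoidAlgebra k G) c • m :=
  ρ.asModuleEquiv_symm_map_smul c m

lemma single_smul_asModule (ρ : Representation k G V) (g : G) (c : k) (m : ρ.asModule) :
    (MonoidAlgebra.single g c : MonoidAlgebra k G) • m
      = c • ((MonoidAlgebra.of k G g) • m) := by
  rw [asModule_ksmul, ← mul_smul]
  congr 1
  rw [MonoidAlgebra.of_apply, MonoidAlgebra.coe_algebraMap]
  show MonoidAlgebra.single g c = MonoidAlgebra.single (1 : G) c * MonoidAlgebra.single g 1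
  rw [MonoidAlgebra.single_mul_single, one_mul, mul_one]

end RepHelpers

/-- Let `G` be the Klein four-group with nonidentity elements `a, b, c`, `k` an
algebraically closed field of characteristic 2, `U = kG/(a−1)`, and `ℓ` the automorphism of `G`
cyclically permuting `a, b, c`.  Then the `kG`-module `U ⊗_k ^ℓU` (diagonal `G`-action) is
projective, but `U ⊗_k U` is not projective. -/
theorem stmt_6 (k : Type) [Field k] [IsAlgClosed k] [CharP k 2]
    (a b c : KleinFour) (ha : a ≠ 1) (hb : b ≠ 1) (hc : c ≠ 1)
    (hab : a ≠ b) (hac : a ≠ c) (hbc : b ≠ c)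
    (ℓ : KleinFour ≃* KleinFour) (hℓa : ℓ a = b) (hℓb : ℓ b = c) (hℓc : ℓ c = a) :
    Module.Projective (MonoidAlgebra k KleinFour)
      ((rhoU k a).tprod (@twist k _ _ _ (moduleRestrictScalarsUmod k a) ℓ (rhoU k a))).asModule ∧
    ¬ Module.Projective (MonoidAlgebra k KleinFour)
      ((rhoU k a).tprod (rhoU k a)).asModule := by
  classical
  -- ℓ.symm values
  have hsa : ℓ.symm a = c := by rw [← hℓc, MulEquiv.symm_apply_apply]
  have hsb : ℓ.symm b = a := by rw [← hℓa, MulEquiv.symm_apply_apply]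
  have hsc : ℓ.symm c = b := by rw [← hℓb, MulEquiv.symm_apply_apply]
  -- base vectors
  set u1 := uuV k a 1 with hu1
  set ub := uuV k a (MonoidAlgebra.of k KleinFour b) with hub
  -- quotient identifications
  have hmka : uuV k a (MonoidAlgebra.of k KleinFour a) = u1 := by
    rw [hu1, uuV_eq_iff]
    exact Ideal.mem_span_singleton_self _
  have hmkc : uuV k a (MonoidAlgebra.of k KleinFour c) = ub := by
    rw [hub, uuV_eq_iff]
    have h : MonoidAlgebra.of k KleinFour c - MonoidAlgebra.of k KleinFour b
        = MonoidAlgebra.of k KleinFour b * (MonoidAlgebra.of k KleinFour a - 1) := by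
      rw [mul_sub, mul_one, ← map_mul, klein_mul_ba ha hb hc hab hac hbc]
    rw [h]
    exact Ideal.mul_mem_left _ _ (Ideal.mem_span_singleton_self _)
  -- action of the generators on the base vectors
  have hA1 : rhoU k a a u1 = u1 := by rw [hu1, rhoU_apply, mul_one, hmka]
  have hB1 : rhoU k a b u1 = ub := by rw [hu1, rhoU_apply, mul_one]
  have hC1 : rhoU k a c u1 = ub := by rw [hu1, rhoU_apply, mul_one, hmkc]
  have hAb : rhoU k a a ub = ub := by
    rw [hub, rhoU_apply, ← map_mul, klein_mul_ab ha hb hc hab hac hbc, hmkc]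
  have hBb : rhoU k a b ub = u1 := by
    rw [hub, rhoU_apply, ← map_mul, klein_sq, map_one]
  have hCb : rhoU k a c ub = u1 := by
    rw [hub, rhoU_apply, ← map_mul, klein_mul_cb ha hb hc hab hac hbc, hmka]
  -- decomposition of an arbitrary element of V
  have hdecV : ∀ v : RestrictScalars k (MonoidAlgebra k KleinFour) (Umod k a),
      ∃ α γ : k, v = α • u1 + γ • ub := by
    intro v
    obtain ⟨x, rfl⟩ := uuV_surjective v
    refine ⟨x.coeff 1 + x.coeff a, x.coeff b + x.coeff c, ?_⟩
    rw [hu1, hub, uuV_ksmul, uuV_ksmul, mul_one, ← uuV_add, uuV_eq_iff]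
    have h : MonoidAlgebra.single (1 : KleinFour) (x.coeff b + x.coeff c) * MonoidAlgebra.of k KleinFour b
        = MonoidAlgebra.single b (x.coeff b + x.coeff c) := by
      rw [MonoidAlgebra.of_apply, MonoidAlgebra.single_mul_single, one_mul, mul_one]
    rw [h]
    exact sub_rep ha hb hc hab hac hbc x
  -- functionals
  have hf0 : ∀ x ∈ Ideal.span {MonoidAlgebra.of k KleinFour a - 1},
      ((coeffL 1 + coeffL a : MonoidAlgebra k KleinFour →ₗ[k] k)) x = 0 := by
    intro x hx
    have h := (mem_span_coeff ha hb hc hab hac hbc hx).1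
    simp only [LinearMap.add_apply, coeffL_apply]
    rw [h, CharTwo.add_self_eq_zero]
  have hf1 : ∀ x ∈ Ideal.span {MonoidAlgebra.of k KleinFour a - 1},
      ((coeffL b + coeffL c : MonoidAlgebra k KleinFour →ₗ[k] k)) x = 0 := by
    intro x hx
    have h := (mem_span_coeff ha hb hc hab hac hbc hx).2
    simp only [LinearMap.add_apply, coeffL_apply]
    rw [h, CharTwo.add_self_eq_zero]
  set ε0 := epsV (a := a) (coeffL 1 + coeffL a) hf0 with hε0
  set ε1 := epsV (a := a) (coeffL b + coeffL c) hf1 with hε1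
  have hε0u1 : ε0 u1 = 1 := by
    rw [hε0, hu1, epsV_uuV]
    simp only [LinearMap.add_apply, coeffL_apply]
    rw [MonoidAlgebra.one_def, MonoidAlgebra.coeff_single]
    rw [Finsupp.single_eq_same, Finsupp.single_eq_of_ne' (Ne.symm ha), add_zero]
  have hε0ub : ε0 ub = 0 := by
    rw [hε0, hub, epsV_uuV]
    simp only [LinearMap.add_apply, coeffL_apply, MonoidAlgebra.of_apply, MonoidAlgebra.coeff_single]
    rw [Finsupp.single_eq_of_ne' hb, Finsupp.single_eq_of_ne' (Ne.symm hab), add_zero]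
  have hε1u1 : ε1 u1 = 0 := by
    rw [hε1, hu1, epsV_uuV]
    simp only [LinearMap.add_apply, coeffL_apply]
    rw [MonoidAlgebra.one_def, MonoidAlgebra.coeff_single]
    rw [Finsupp.single_eq_of_ne' (Ne.symm hb), Finsupp.single_eq_of_ne' (Ne.symm hc), add_zero]
  have hε1ub : ε1 ub = 1 := by
    rw [hε1, hub, epsV_uuV]
    simp only [LinearMap.add_apply, coeffL_apply, MonoidAlgebra.of_apply, MonoidAlgebra.coeff_single]
    rw [Finsupp.single_eq_same, Finsupp.single_eq_of_ne' hbc, add_zero]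
  -- the tensor functionals
  set F00 := (TensorProduct.lid k k).toLinearMap ∘ₗ TensorProduct.map ε0 ε0 with hF00
  set F01 := (TensorProduct.lid k k).toLinearMap ∘ₗ TensorProduct.map ε0 ε1 with hF01
  set F10 := (TensorProduct.lid k k).toLinearMap ∘ₗ TensorProduct.map ε1 ε0 with hF10
  set F11 := (TensorProduct.lid k k).toLinearMap ∘ₗ TensorProduct.map ε1 ε1 with hF11
  constructor
  · -- Part 1 : U ⊗ ℓU is projective
    set ρT := (rhoU k a).tprod (@twist k _ _ _ (moduleRestrictScalarsUmod k a) ℓ (rhoU k a)) with hρT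
    set m0 : ρT.asModule := (show ρT.asModule from u1 ⊗ₜ u1) with hm0
    -- action of group elements on m0
    have hOa : (MonoidAlgebra.of k KleinFour a) • m0 = (show ρT.asModule from u1 ⊗ₜ ub) := by
      rw [hm0, hρT, of_smul_tmul, show (@twist k _ _ _ (moduleRestrictScalarsUmod k a) ℓ (rhoU k a)) a u1 = rhoU k a (ℓ.symm a) u1 from rfl, hsa, hA1, hC1]
    have hOb : (MonoidAlgebra.of k KleinFour b) • m0 = (show ρT.asModule from ub ⊗ₜ u1) := by
      rw [hm0, hρT, of_smul_tmul, show (@twist k _ _ _ (moduleRestrictScalarsUmod k a) ℓ (rhoU k a)) b u1 = rhoU k a (ℓ.symm b) u1 from rfl, hsb, hB1, hA1]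
    have hOc : (MonoidAlgebra.of k KleinFour c) • m0 = (show ρT.asModule from ub ⊗ₜ ub) := by
      rw [hm0, hρT, of_smul_tmul, show (@twist k _ _ _ (moduleRestrictScalarsUmod k a) ℓ (rhoU k a)) c u1 = rhoU k a (ℓ.symm c) u1 from rfl, hsc, hC1, hB1]
    -- general expansion of r • m0
    have hexp : ∀ r : MonoidAlgebra k KleinFour,
        r • m0 = (show ρT.asModule from
          (r.coeff 1) • (u1 ⊗ₜ[k] u1) + (r.coeff a) • (u1 ⊗ₜ[k] ub)
            + (r.coeff b) • (ub ⊗ₜ[k] u1) + (r.coeff c) • (ub ⊗ₜ[k] ub)) := by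
      intro r
      conv_lhs => rw [decomp ha hb hc hab hac hbc r]
      rw [add_smul, add_smul, add_smul]
      rw [show (MonoidAlgebra.single (1 : KleinFour) (r.coeff 1) : MonoidAlgebra k KleinFour)
          = MonoidAlgebra.single (1 : KleinFour) (r.coeff 1) from rfl]
      rw [show (MonoidAlgebra.single a (r.coeff a) : MonoidAlgebra k KleinFour)
          = MonoidAlgebra.single a (r.coeff a) from rfl]
      rw [show (MonoidAlgebra.single b (r.coeff b) : MonoidAlgebra k KleinFour)
          = MonoidAlgebra.single b (r.coeff b) from rfl]
      rw [show (MonoidAlgebra.single c (r.coeff c) : MonoidAlgebra k KleinFour)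
          = MonoidAlgebra.single c (r.coeff c) from rfl]
      rw [single_smul_asModule, single_smul_asModule, single_smul_asModule, single_smul_asModule]
      have hone : (MonoidAlgebra.of k KleinFour (1 : KleinFour))
          = (1 : MonoidAlgebra k KleinFour) := map_one _
      rw [hone, one_smul, hOa, hOb, hOc]
      rfl
    -- the natural map
    set φ := LinearMap.toSpanSingleton (MonoidAlgebra k KleinFour) ρT.asModule m0 with hφ
    have hsurj : Function.Surjective φ := by
      have key : ∀ mm : (RestrictScalars k (MonoidAlgebra k KleinFour) (Umod k a)) ⊗[k]
          (RestrictScalars k (MonoidAlgebra k KleinFour) (Umod k a)),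
          ∃ r : MonoidAlgebra k KleinFour, r • m0 = (show ρT.asModule from mm) := by
        intro mm
        induction mm using TensorProduct.induction_on with
        | zero => exact ⟨0, by rw [zero_smul]; rfl⟩
        | add z w hz hw =>
          obtain ⟨r, hr⟩ := hz
          obtain ⟨s, hs⟩ := hw
          exact ⟨r + s, by rw [add_smul, hr, hs]; rfl⟩
        | tmul u v =>
          obtain ⟨α, γ, rfl⟩ := hdecV u
          obtain ⟨α', γ', rfl⟩ := hdecV v
          refine ⟨MonoidAlgebra.single 1 (α * α') + MonoidAlgebra.single a (α * γ')
            + MonoidAlgebra.single b (γ * α') + MonoidAlgebra.single c (γ * γ'), ?_⟩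
          rw [hexp]
          set rr : MonoidAlgebra k KleinFour := MonoidAlgebra.single 1 (α * α')
            + MonoidAlgebra.single a (α * γ') + MonoidAlgebra.single b (γ * α')
            + MonoidAlgebra.single c (γ * γ') with hrr
          have capp : ∀ g : KleinFour, rr.coeff g
              = (Finsupp.single (1 : KleinFour) (α * α') : KleinFour →₀ k) g
                + (Finsupp.single a (α * γ') : KleinFour →₀ k) g
                + (Finsupp.single b (γ * α') : KleinFour →₀ k) g
                + (Finsupp.single c (γ * γ') : KleinFour →₀ k) g := by
            intro g
            rw [hrr]
            simp only [MonoidAlgebra.coeff_add, Finsupp.add_apply, MonoidAlgebra.coeff_single]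
          have c1 : rr.coeff 1 = α * α' := by
            rw [capp, Finsupp.single_eq_same, Finsupp.single_eq_of_ne' ha,
              Finsupp.single_eq_of_ne' hb, Finsupp.single_eq_of_ne' hc]
            ring
          have ca : rr.coeff a = α * γ' := by
            rw [capp, Finsupp.single_eq_same, Finsupp.single_eq_of_ne' (Ne.symm ha),
              Finsupp.single_eq_of_ne' (Ne.symm hab), Finsupp.single_eq_of_ne' (Ne.symm hac)]
            ring
          have cb : rr.coeff b = γ * α' := by
            rw [capp, Finsupp.single_eq_same, Finsupp.single_eq_of_ne' (Ne.symm hb),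
              Finsupp.single_eq_of_ne' hab, Finsupp.single_eq_of_ne' (Ne.symm hbc)]
            ring
          have cc : rr.coeff c = γ * γ' := by
            rw [capp, Finsupp.single_eq_same, Finsupp.single_eq_of_ne' (Ne.symm hc),
              Finsupp.single_eq_of_ne' hac, Finsupp.single_eq_of_ne' hbc]
            ring
          rw [c1, ca, cb, cc]
          exact tensor_expand u1 ub u1 ub α γ α' γ' 
      intro m
      obtain ⟨r, hr⟩ := key m
      exact ⟨r, hr⟩
    have hker : ∀ r : MonoidAlgebra k KleinFour, r • m0 = 0 → r = 0 := by
      intro r hr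
      rw [hexp] at hr
      have hr' : (r.coeff 1) • (u1 ⊗ₜ[k] u1) + (r.coeff a) • (u1 ⊗ₜ[k] ub)
          + (r.coeff b) • (ub ⊗ₜ[k] u1) + (r.coeff c) • (ub ⊗ₜ[k] ub)
          = (0 : (RestrictScalars k (MonoidAlgebra k KleinFour) (Umod k a)) ⊗[k]
              (RestrictScalars k (MonoidAlgebra k KleinFour) (Umod k a))) := hr
      have e00 := congrArg (fun z => F00 z) hr'
      have e01 := congrArg (fun z => F01 z) hr'
      have e10 := congrArg (fun z => F10 z) hr'
      have e11 := congrArg (fun z => F11 z) hr'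
      simp only [hF00, hF01, hF10, hF11, map_add, LinearMap.map_smul, LinearMap.coe_comp,
        LinearEquiv.coe_coe, Function.comp_apply, TensorProduct.map_tmul, TensorProduct.lid_tmul,
        hε0u1, hε0ub, hε1u1, hε1ub, map_zero, smul_eq_mul, mul_one, mul_zero, one_mul, zero_mul,
        smul_zero, add_zero, zero_add] at e00 e01 e10 e11
      rw [decomp ha hb hc hab hac hbc r, e00, e01, e10, e11]
      simp
    have hinj : Function.Injective φ := by
      intro r r' hrr
      rw [hφ, LinearMap.toSpanSingleton_apply, LinearMap.toSpanSingleton_apply] at hrr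
      have h0 : (r - r') • m0 = 0 := by
        rw [sub_eq_add_neg r r', add_smul, hrr, ← add_smul, add_neg_cancel, zero_smul]
      exact sub_eq_zero.1 (hker _ h0)
    exact Module.Projective.of_equiv (LinearEquiv.ofBijective φ ⟨hinj, hsurj⟩)
  · -- Part 2 : U ⊗ U is not projective
    intro hP
    -- `a` acts trivially on `U`
    have htrivV : ∀ v : RestrictScalars k (MonoidAlgebra k KleinFour) (Umod k a),
        rhoU k a a v = v := by
      intro v
      obtain ⟨x, rfl⟩ := uuV_surjective v
      rw [rhoU_apply, uuV_eq_iff]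
      have h : MonoidAlgebra.of k KleinFour a * x - x
          = x * (MonoidAlgebra.of k KleinFour a - 1) := by ring
      rw [h]
      exact Ideal.mul_mem_left _ _ (Ideal.mem_span_singleton_self _)
    set ρS := (rhoU k a).tprod (rhoU k a) with hρS
    -- hence `a` acts trivially on `U ⊗ U`
    have htriv : ∀ m : ρS.asModule, (MonoidAlgebra.of k KleinFour a) • m = m := by
      have key : ∀ mm : (RestrictScalars k (MonoidAlgebra k KleinFour) (Umod k a)) ⊗[k]
          (RestrictScalars k (MonoidAlgebra k KleinFour) (Umod k a)),
          (MonoidAlgebra.of k KleinFour a) • (show ρS.asModule from mm)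
            = (show ρS.asModule from mm) := by
        intro mm
        induction mm using TensorProduct.induction_on with
        | zero =>
          exact (DistribMulAction.toAddMonoidHom ρS.asModule (MonoidAlgebra.of k KleinFour a)).map_zero
        | add z w hz hw =>
          exact (smul_add (MonoidAlgebra.of k KleinFour a)
            (show ρS.asModule from z) (show ρS.asModule from w)).trans
              (congrArg₂ (· + ·) hz hw)
        | tmul u v =>
          rw [hρS, of_smul_tmul, htrivV, htrivV]
      intro m
      exact key m
    have hann : ∀ m : ρS.asModule,
        ((MonoidAlgebra.of k KleinFour a - 1 : MonoidAlgebra k KleinFour)) • m = 0 := by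
      intro m
      refine (congrArg (· • m) (sub_eq_add_neg (MonoidAlgebra.of k KleinFour a) 1)).trans ?_
      rw [add_smul, htriv]
      calc m + (-1 : MonoidAlgebra k KleinFour) • m
          = (1 : MonoidAlgebra k KleinFour) • m + (-1 : MonoidAlgebra k KleinFour) • m := by
            rw [one_smul]
        _ = 0 := by rw [← add_smul, add_neg_cancel, zero_smul]
    -- the element u1 ⊗ u1 is nonzero
    set m0' : ρS.asModule := (show ρS.asModule from u1 ⊗ₜ[k] u1) with hm0'
    have hne : m0' ≠ 0 := by
      intro h0
      have h0' : (u1 ⊗ₜ[k] u1 :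
          (RestrictScalars k (MonoidAlgebra k KleinFour) (Umod k a)) ⊗[k]
          (RestrictScalars k (MonoidAlgebra k KleinFour) (Umod k a))) = 0 := h0
      have hF := congrArg (fun z => F00 z) h0'
      simp only [hF00, LinearMap.coe_comp, LinearEquiv.coe_coe, Function.comp_apply,
        TensorProduct.map_tmul, TensorProduct.lid_tmul, hε0u1, map_zero, smul_eq_mul,
        mul_one] at hF
      exact one_ne_zero hF
    -- a projective module killed by (a-1) must vanish
    obtain ⟨s, hs⟩ := hP.out
    have hsm : ((MonoidAlgebra.of k KleinFour a - 1 : MonoidAlgebra k KleinFour)) • s m0'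
        = 0 := by
      rw [← map_smul, hann, map_zero]
    have hcoeff : ∀ i, s m0' i ∈ Ideal.span {MonoidAlgebra.of k KleinFour a - 1} := by
      intro i
      have h := congrArg (fun f : ρS.asModule →₀ MonoidAlgebra k KleinFour => f i) hsm
      simp only [Finsupp.smul_apply, Finsupp.coe_zero, Pi.zero_apply, smul_eq_mul] at h
      exact ker_sub ha hb hc hab hac hbc (by rw [mul_comm]; exact h)
    have hz : Finsupp.linearCombination _ id (s m0') = 0 := by
      rw [Finsupp.linearCombination_apply]
      refine Finset.sum_eq_zero ?_
      intro i _
      obtain ⟨t, ht⟩ := Ideal.mem_span_singleton'.1 (hcoeff i)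
      show (s m0') i • id i = 0
      rw [← ht, id, mul_smul, hann, smul_zero]
    exact hne ((hs m0').symm.trans hz)
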